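/- Fix integers n ≥ 4 and 1 ≤ k ≤ n−1. Let U ⊆ (ℝ²)^{n−4} × ℝ^k be the set of tuples (A_5,…,A_n, t_{n−k+1},…,t_n) such that the points (0,0), (1,0), (1,1), (0,1), A_5,…,A_n are in strictly convex position in this cyclic order and each t_j lies in the open interval (0,1). Then U is a nonempty open subset of ℝ^{2n−8+k} which is homeomorphic to ℝ^{2n−8+k}. (U parametrizes normalized seeds of type (n,k), with B_j = A_j + t_j(A_{j+1} − A_j); hence the space C(n,k) of projective equivalence classes of labeled PLC pentagram spirals of type (n,k) is an open cell of dimension (2n−8)+k.) -/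

import Mathlib

/-- Planar determinant (cross product) of two vectors of `ℝ²`. -/
def det2 (u v : ℝ × ℝ) : ℝ := u.1 * v.2 - u.2 * v.1

/-- Counterclockwise orientation of an ordered triple of points of `ℝ²`. -/
def ccw (a b c : ℝ × ℝ) : Prop := 0 < det2 (b - a) (c - a)

/-- Points `w 0, …, w (N-1)` are in strictly convex position in this
(counterclockwise) cyclic order: every ordered triple is counterclockwise. -/
def StrictlyConvexCCW {N : ℕ} (w : Fin N → ℝ × ℝ) : Prop :=
  ∀ i j k : Fin N, i < j → j < k → ccw (w i) (w j) (w k)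

/-- The set `U` of tuples `(A₅, …, Aₙ, t_{n-k+1}, …, tₙ)` such that the points
`(0,0), (1,0), (1,1), (0,1), A₅, …, Aₙ` are in strictly convex position in this
cyclic order and each `t_j` lies in `(0,1)`.  `U` parametrizes normalized seeds of
type `(n,k)`, with `B_j = A_j + t_j (A_{j+1} - A_j)`. -/
def normSeedSet (n k : ℕ) : Set ((Fin (n - 4) → ℝ × ℝ) × (Fin k → ℝ)) :=
  {x | StrictlyConvexCCW (fun i : Fin n =>
        if h : (i : ℕ) < 4 then
          (![((0 : ℝ), (0 : ℝ)), (1, 0), (1, 1), (0, 1)] : Fin 4 → ℝ × ℝ) ⟨i, h⟩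
        else x.1 ⟨(i : ℕ) - 4, by have := i.isLt; omega⟩) ∧
      ∀ j : Fin k, x.2 j ∈ Set.Ioo (0 : ℝ) 1}

namespace PentagramCell
open Set

lemma cone2 {a b e x : ℝ × ℝ} (hab : 0 < det2 a b) (hae : 0 < det2 a e)
    (heb : 0 < det2 e b) (hax : 0 < det2 a x) (hbx : 0 < det2 b x) :
    0 < det2 e x := by
  have key : det2 a b * det2 e x = det2 e b * det2 a x + det2 a e * det2 b x := by
    simp only [det2]; ring
  nlinarith [mul_pos heb hax, mul_pos hae hbx]

lemma insert_last {N : ℕ} (hN : 3 ≤ N) (c : Fin N → ℝ × ℝ)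
    (hc : StrictlyConvexCCW c) (p : ℝ × ℝ)
    (h1 : ccw (c ⟨0, by omega⟩) (c ⟨1, by omega⟩) p)
    (h2 : ccw (c ⟨N - 2, by omega⟩) (c ⟨N - 1, by omega⟩) p)
    (h3 : ccw (c ⟨0, by omega⟩) (c ⟨N - 1, by omega⟩) p) :
    ∀ i j : Fin N, i < j → ccw (c i) (c j) p := by
  set c0 : ℝ × ℝ := c ⟨0, by omega⟩ with hc0
  set cS : ℝ × ℝ := c ⟨N - 2, by omega⟩ with hcS
  set cl : ℝ × ℝ := c ⟨N - 1, by omega⟩ with hcl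
  -- step B : from c0
  have stepB : ∀ j : Fin N, 0 < (j : ℕ) → ccw c0 (c j) p := by
    intro j hj
    rcases eq_or_lt_of_le (Nat.one_le_iff_ne_zero.mpr (Nat.pos_iff_ne_zero.mp hj)) with h1j | h1j
    · have : j = ⟨1, by omega⟩ := Fin.ext h1j.symm
      rw [this]; exact h1
    rcases eq_or_lt_of_le (Nat.le_sub_one_of_lt j.isLt) with hjl | hjl
    · have : j = ⟨N - 1, by omega⟩ := Fin.ext hjl
      rw [this]; exact h3
    · show 0 < det2 (c j - c0) (p - c0)
      apply cone2 (a := c ⟨1, by omega⟩ - c0) (b := cl - c0)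
      · exact hc ⟨0, by omega⟩ ⟨1, by omega⟩ ⟨N - 1, by omega⟩
          (by simp [Fin.mk_lt_mk]) (by simp [Fin.mk_lt_mk]; omega)
      · exact hc ⟨0, by omega⟩ ⟨1, by omega⟩ j (by simp [Fin.mk_lt_mk])
          (by simp [Fin.lt_def]; omega)
      · exact hc ⟨0, by omega⟩ j ⟨N - 1, by omega⟩ (by simp [Fin.lt_def]; omega)
          (by simp [Fin.lt_def]; omega)
      · exact h1
      · exact h3
  -- step A : to cl
  have stepA : ∀ i : Fin N, (i : ℕ) < N - 1 → ccw (c i) cl p := by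
    intro i hi
    rcases Nat.eq_zero_or_pos (i : ℕ) with h0i | h0i
    · have : i = ⟨0, by omega⟩ := Fin.ext h0i
      rw [this]; exact h3
    rcases eq_or_lt_of_le (by omega : (i : ℕ) ≤ N - 2) with hiS | hiS
    · have : i = ⟨N - 2, by omega⟩ := Fin.ext hiS
      rw [this]; exact h2
    · show 0 < det2 (cl - c i) (p - c i)
      have e1 : det2 (cl - c i) (p - c i) = det2 (cl - c i) (p - cl) := by
        simp only [det2, Prod.fst_sub, Prod.snd_sub]; ring
      rw [e1]
      apply cone2 (a := cl - c0) (b := cl - cS)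
      · have : (0:ℝ) < det2 (cS - c0) (cl - c0) :=
          hc ⟨0, by omega⟩ ⟨N - 2, by omega⟩ ⟨N - 1, by omega⟩
            (by simp [Fin.mk_lt_mk]; omega) (by simp [Fin.mk_lt_mk]; omega)
        have e : det2 (cl - c0) (cl - cS) = det2 (cS - c0) (cl - c0) := by
          simp only [det2, Prod.fst_sub, Prod.snd_sub]; ring
        rw [e]; exact this
      · have : (0:ℝ) < det2 (c i - c0) (cl - c0) :=
          hc ⟨0, by omega⟩ i ⟨N - 1, by omega⟩ (by simp [Fin.lt_def]; omega)
            (by simp [Fin.lt_def]; omega)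
        have e : det2 (cl - c0) (cl - c i) = det2 (c i - c0) (cl - c0) := by
          simp only [det2, Prod.fst_sub, Prod.snd_sub]; ring
        rw [e]; exact this
      · have : (0:ℝ) < det2 (cS - c i) (cl - c i) :=
          hc i ⟨N - 2, by omega⟩ ⟨N - 1, by omega⟩ (by simp [Fin.lt_def]; omega)
            (by simp [Fin.mk_lt_mk]; omega)
        have e : det2 (cl - c i) (cl - cS) = det2 (cS - c i) (cl - c i) := by
          simp only [det2, Prod.fst_sub, Prod.snd_sub]; ring
        rw [e]; exact this
      · have e : det2 (cl - c0) (p - cl) = det2 (cl - c0) (p - c0) := by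
          simp only [det2, Prod.fst_sub, Prod.snd_sub]; ring
        rw [e]; exact h3
      · have e : det2 (cl - cS) (p - cl) = det2 (cl - cS) (p - cS) := by
          simp only [det2, Prod.fst_sub, Prod.snd_sub]; ring
        rw [e]; exact h2
  -- general case
  intro i j hij
  rcases Nat.eq_zero_or_pos (i : ℕ) with h0i | h0i
  · have : i = ⟨0, by omega⟩ := Fin.ext h0i
    rw [this]; exact stepB j (by have := Fin.lt_def.mp hij; omega)
  rcases eq_or_lt_of_le (Nat.le_sub_one_of_lt j.isLt) with hjl | hjl
  · have : j = ⟨N - 1, by omega⟩ := Fin.ext hjl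
    rw [this]; exact stepA i (by have := Fin.lt_def.mp hij; omega)
  · show 0 < det2 (c j - c i) (p - c i)
    apply cone2 (a := c i - c0) (b := cl - c i)
    · have : (0:ℝ) < det2 (c i - c0) (cl - c0) :=
        hc ⟨0, by omega⟩ i ⟨N - 1, by omega⟩ (by simp [Fin.lt_def]; omega)
          (by simp [Fin.lt_def]; omega)
      have e : det2 (c i - c0) (cl - c i) = det2 (c i - c0) (cl - c0) := by
        simp only [det2, Prod.fst_sub, Prod.snd_sub]; ring
      rw [e]; exact this
    · have : (0:ℝ) < det2 (c i - c0) (c j - c0) :=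
        hc ⟨0, by omega⟩ i j (by simp [Fin.lt_def]; omega) hij
      have e : det2 (c i - c0) (c j - c i) = det2 (c i - c0) (c j - c0) := by
        simp only [det2, Prod.fst_sub, Prod.snd_sub]; ring
      rw [e]; exact this
    · exact hc i j ⟨N - 1, by omega⟩ hij (by simp [Fin.lt_def]; omega)
    · have : (0:ℝ) < det2 (c i - c0) (p - c0) := stepB i h0i
      have e : det2 (c i - c0) (p - c i) = det2 (c i - c0) (p - c0) := by
        simp only [det2, Prod.fst_sub, Prod.snd_sub]; ring
      rw [e]; exact this
    · exact stepA i (by have := Fin.lt_def.mp hij; omega)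


noncomputable def qsq : Fin 4 → ℝ × ℝ := ![(0,0),(1,0),(1,1),(0,1/2)]

noncomputable def cfg (m : ℕ) (w : Fin m → ℝ × ℝ) : Fin (m+4) → ℝ × ℝ :=
  fun i => if h : (i:ℕ) < 4 then qsq ⟨i, h⟩ else w ⟨(i:ℕ) - 4, by omega⟩

def Vst (m : ℕ) : Set (Fin m → ℝ × ℝ) := {w | StrictlyConvexCCW (cfg m w)}

lemma cfg_lt (m : ℕ) (w : Fin m → ℝ × ℝ) {i : ℕ} (h4 : i < 4) (h : i < m + 4) :
    cfg m w ⟨i, h⟩ = qsq ⟨i, h4⟩ := by simp [cfg, h4]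

lemma cfg_ge (m : ℕ) (w : Fin m → ℝ × ℝ) {i : ℕ} (h4 : ¬ i < 4) (h : i < m + 4) :
    cfg m w ⟨i, h⟩ = w ⟨i - 4, by omega⟩ := by simp [cfg, h4]

lemma qsq0 : qsq ⟨0, by omega⟩ = (0,0) := rfl
lemma qsq1 : qsq ⟨1, by omega⟩ = (1,0) := rfl
lemma qsq2 : qsq ⟨2, by omega⟩ = (1,1) := rfl
lemma qsq3 : qsq ⟨3, by omega⟩ = (0,1/2) := rfl

def extc {N : ℕ} (c : Fin N → ℝ × ℝ) (p : ℝ × ℝ) : Fin (N+1) → ℝ × ℝ :=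
  fun i => if h : (i:ℕ) < N then c ⟨i, h⟩ else p

lemma extc_lt {N : ℕ} {c : Fin N → ℝ × ℝ} {p : ℝ × ℝ} {i : Fin (N+1)}
    (h : (i:ℕ) < N) : extc c p i = c ⟨i, h⟩ := dif_pos h

lemma extc_ge {N : ℕ} {c : Fin N → ℝ × ℝ} {p : ℝ × ℝ} {i : Fin (N+1)}
    (h : ¬ (i:ℕ) < N) : extc c p i = p := dif_neg h

lemma extc_lt' {N : ℕ} {c : Fin N → ℝ × ℝ} {p : ℝ × ℝ} {i : ℕ}
    (h : i < N) (h' : i < N+1) : extc c p ⟨i, h'⟩ = c ⟨i, h⟩ := dif_pos h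

lemma extc_ge' {N : ℕ} {c : Fin N → ℝ × ℝ} {p : ℝ × ℝ} {i : ℕ}
    (h : ¬ i < N) (h' : i < N+1) : extc c p ⟨i, h'⟩ = p := dif_neg h

lemma convex_extc {N : ℕ} {c : Fin N → ℝ × ℝ} {p : ℝ × ℝ}
    (hc : StrictlyConvexCCW c) (hp : ∀ i j : Fin N, i < j → ccw (c i) (c j) p) :
    StrictlyConvexCCW (extc c p) := by
  intro i j k hij hjk
  obtain ⟨iv, hi'⟩ := i; obtain ⟨jv, hj'⟩ := j; obtain ⟨kv, hk'⟩ := k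
  rw [Fin.mk_lt_mk] at hij hjk
  by_cases hk : kv < N
  · have hj : jv < N := by omega
    have hi : iv < N := by omega
    rw [extc_lt (i := ⟨iv, hi'⟩) hi, extc_lt (i := ⟨jv, hj'⟩) hj, extc_lt (i := ⟨kv, hk'⟩) hk]
    exact hc _ _ _ (Fin.mk_lt_mk.mpr hij) (Fin.mk_lt_mk.mpr hjk)
  · have hj : jv < N := by omega
    have hi : iv < N := by omega
    rw [extc_lt (i := ⟨iv, hi'⟩) hi, extc_lt (i := ⟨jv, hj'⟩) hj, extc_ge (i := ⟨kv, hk'⟩) hk]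
    exact hp _ _ (Fin.mk_lt_mk.mpr hij)

lemma cfg_succ (m : ℕ) (w : Fin (m+1) → ℝ × ℝ) :
    cfg (m+1) w = extc (cfg m (fun j : Fin m => w ⟨(j:ℕ), by omega⟩)) (w ⟨m, by omega⟩) := by
  funext i
  obtain ⟨iv, hiv⟩ := i
  rcases Nat.lt_or_ge iv 4 with h4 | h4
  · rw [cfg_lt _ _ h4, extc_lt' (show iv < m + 4 by omega) hiv, cfg_lt _ _ h4]
  · rcases Nat.lt_or_ge iv (m+4) with hlt | hge
    · rw [cfg_ge _ _ (by omega), extc_lt' hlt hiv, cfg_ge _ _ (by omega)]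
    · have hi : iv = m + 4 := by omega
      rw [cfg_ge _ _ (by omega), extc_ge' (by omega) hiv]
      congr 1
      simp only [Fin.mk.injEq]; omega

lemma Vst_restrict {m : ℕ} {w : Fin (m+1) → ℝ × ℝ} (hw : w ∈ Vst (m+1)) :
    (fun j : Fin m => w ⟨(j:ℕ), by omega⟩) ∈ Vst m := by
  intro i j k hij hjk
  have key : ∀ r : Fin (m+4), cfg m (fun j : Fin m => w ⟨(j:ℕ), by omega⟩) r
      = cfg (m+1) w ⟨(r:ℕ), by omega⟩ := by
    intro r
    rw [cfg_succ]
    exact (extc_lt' r.isLt (by omega)).symm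
  rw [key, key, key]
  exact hw _ _ _ (Fin.mk_lt_mk.mpr hij) (Fin.mk_lt_mk.mpr hjk)

section PointFacts

variable {m : ℕ} {pre : Fin m → ℝ × ℝ}

lemma pt_y_pos (h : StrictlyConvexCCW (cfg m pre)) (i : Fin (m+4)) (hi : 2 ≤ (i:ℕ)) :
    0 < (cfg m pre i).2 := by
  have hlt := h ⟨0, by omega⟩ ⟨1, by omega⟩ i (Fin.mk_lt_mk.mpr (by omega))
    (by rw [Fin.lt_def]; exact hi)
  rw [cfg_lt _ _ (by omega), cfg_lt _ _ (by omega), qsq0, qsq1] at hlt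
  have e : det2 ((1,0) - ((0:ℝ),(0:ℝ))) (cfg m pre i - (0,0)) = (cfg m pre i).2 := by
    simp only [det2, Prod.fst_sub, Prod.snd_sub]; norm_num
  unfold ccw at hlt; rw [e] at hlt; exact hlt

lemma pt_x_gt (h : StrictlyConvexCCW (cfg m pre)) (i : Fin (m+4)) (hi : 4 ≤ (i:ℕ)) :
    -1 < (cfg m pre i).1 := by
  have h23 := h ⟨2, by omega⟩ ⟨3, by omega⟩ i (Fin.mk_lt_mk.mpr (by omega))
    (by rw [Fin.lt_def]; show 3 < (i:ℕ); omega)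
  rw [cfg_lt _ _ (by omega), cfg_lt _ _ (by omega), qsq2, qsq3] at h23
  have hy := pt_y_pos h i (by omega)
  unfold ccw det2 at h23
  simp only [Prod.fst_sub, Prod.snd_sub] at h23
  norm_num at h23
  linarith

lemma det_uv_pos (h : StrictlyConvexCCW (cfg m pre)) :
    0 < det2 (cfg m pre ⟨m+2, by omega⟩) (cfg m pre ⟨m+3, by omega⟩) := by
  have hlt := h ⟨0, by omega⟩ ⟨m+2, by omega⟩ ⟨m+3, by omega⟩
    (Fin.mk_lt_mk.mpr (by omega)) (Fin.mk_lt_mk.mpr (by omega))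
  rw [cfg_lt _ _ (by omega), qsq0] at hlt
  unfold ccw at hlt
  have e : det2 (cfg m pre ⟨m+2, by omega⟩ - ((0:ℝ),(0:ℝ))) (cfg m pre ⟨m+3, by omega⟩ - (0,0))
      = det2 (cfg m pre ⟨m+2, by omega⟩) (cfg m pre ⟨m+3, by omega⟩) := by
    simp only [det2, Prod.fst_sub, Prod.snd_sub]; ring
  rw [e] at hlt; exact hlt

lemma ext_cfg_eq (q : ℝ × ℝ) :
    cfg (m+1) (fun j : Fin (m+1) => extc (cfg m pre) q ⟨(j:ℕ)+4, by omega⟩)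
      = extc (cfg m pre) q := by
  funext r
  obtain ⟨rv, hrv⟩ := r
  rcases Nat.lt_or_ge rv 4 with h4 | h4
  · rw [cfg_lt _ _ h4, extc_lt' (show rv < m + 4 by omega) hrv, cfg_lt _ _ h4]
  · rw [cfg_ge _ _ (by omega)]
    congr 1
    simp only [Fin.mk.injEq]; omega

lemma u2_gt_v2 (h : StrictlyConvexCCW (cfg m pre)) :
    (cfg m pre ⟨m+3, by omega⟩).2 < (cfg m pre ⟨m+2, by omega⟩).2 := by
  set u : ℝ × ℝ := cfg m pre ⟨m+2, by omega⟩ with hu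
  set v : ℝ × ℝ := cfg m pre ⟨m+3, by omega⟩ with hv
  by_contra hle
  push_neg at hle   -- u.2 ≤ v.2
  have hu2 : 0 < u.2 := pt_y_pos h _ (by norm_num)
  have hv2 : 0 < v.2 := pt_y_pos h _ (by norm_num)
  have hD : 0 < det2 u v := det_uv_pos h
  set t : ℝ := v.2 / (2 * u.2) with ht
  have htpos : 0 < t := by positivity
  set p1 : ℝ := v.1 - t * u.1 with hp1
  set s : ℝ := max (p1 + 2) 0 with hs
  have hs0 : 0 ≤ s := le_max_right _ _
  have hs2 : p1 + 2 ≤ s := le_max_left _ _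
  set q : ℝ × ℝ := (p1 - s, v.2 - t * u.2) with hq
  have hq2 : q.2 = v.2 / 2 := by
    show v.2 - t * u.2 = v.2 / 2
    rw [ht]; field_simp; ring
  have hF1 : 0 < q.2 := by rw [hq2]; positivity
  have hF2 : 0 < det2 v q := by
    have e : det2 v q = t * det2 u v + s * v.2 := by
      show v.1 * (v.2 - t * u.2) - v.2 * (p1 - s) = _
      rw [hp1]; unfold det2; ring
    rw [e]; positivity
  have hF3 : 0 < det2 (v - u) (q - u) := by
    have e : det2 (v - u) (q - u) = t * det2 u v + s * (v.2 - u.2) := by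
      simp only [det2, Prod.fst_sub, Prod.snd_sub, hq, hp1]
      ring
    rw [e]
    have hnn : 0 ≤ s * (v.2 - u.2) := mul_nonneg hs0 (by linarith)
    nlinarith
  have hins : ∀ i j : Fin (m+4), i < j → ccw (cfg m pre i) (cfg m pre j) q := by
    apply insert_last (by omega) _ h q
    · rw [cfg_lt _ _ (by omega), cfg_lt _ _ (by omega), qsq0, qsq1]
      show 0 < det2 ((1,0) - ((0:ℝ),(0:ℝ))) (q - (0,0))
      have e : det2 ((1,0) - ((0:ℝ),(0:ℝ))) (q - (0,0)) = q.2 := by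
        simp only [det2, Prod.fst_sub, Prod.snd_sub]; norm_num
      rw [e]; exact hF1
    · have e2 : (⟨m + 4 - 2, by omega⟩ : Fin (m+4)) = ⟨m+2, by omega⟩ := by
        simp only [Fin.mk.injEq]; omega
      have e1 : (⟨m + 4 - 1, by omega⟩ : Fin (m+4)) = ⟨m+3, by omega⟩ := by
        simp only [Fin.mk.injEq]; omega
      rw [e2, e1, ← hu, ← hv]
      show 0 < det2 (v - u) (q - u)
      exact hF3
    · have e1 : (⟨m + 4 - 1, by omega⟩ : Fin (m+4)) = ⟨m+3, by omega⟩ := by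
        simp only [Fin.mk.injEq]; omega
      rw [e1, cfg_lt _ _ (by omega), qsq0, ← hv]
      show 0 < det2 (v - (0,0)) (q - (0,0))
      have e : det2 (v - ((0:ℝ),(0:ℝ))) (q - (0,0)) = det2 v q := by
        simp only [det2, Prod.fst_sub, Prod.snd_sub]; ring
      rw [e]; exact hF2
  have hext : StrictlyConvexCCW (extc (cfg m pre) q) := convex_extc h hins
  have hext' : StrictlyConvexCCW (cfg (m+1)
      (fun j : Fin (m+1) => extc (cfg m pre) q ⟨(j:ℕ)+4, by omega⟩)) := by
    rw [ext_cfg_eq]; exact hext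
  have hyq := pt_y_pos hext' ⟨m+4, by omega⟩ (by norm_num)
  have hxq := pt_x_gt hext' ⟨m+4, by omega⟩ (by norm_num)
  rw [ext_cfg_eq] at hyq hxq
  rw [extc_ge' (by omega) (by omega)] at hyq hxq
  -- q.1 = p1 - s ≤ -2
  have hq1 : q.1 ≤ -2 := by show p1 - s ≤ -2; linarith
  linarith [hxq, hq1]

end PointFacts

def ΔSet : Set (ℝ × ℝ) := {z | 0 < z.1 ∧ 0 < z.2 ∧ z.1 + z.2 < 1}

lemma ccw_y {p : ℝ × ℝ} (h : ccw ((0:ℝ),(0:ℝ)) (1,0) p) : 0 < p.2 := by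
  unfold ccw det2 at h
  simp only [Prod.fst_sub, Prod.snd_sub] at h
  norm_num at h
  exact h

lemma ccw_y' {p : ℝ × ℝ} (h : 0 < p.2) : ccw ((0:ℝ),(0:ℝ)) (1,0) p := by
  unfold ccw det2
  simp only [Prod.fst_sub, Prod.snd_sub]
  norm_num
  exact h

lemma ccw_det {v p : ℝ × ℝ} (h : ccw ((0:ℝ),(0:ℝ)) v p) : 0 < det2 v p := by
  unfold ccw at h
  have e : det2 (v - ((0:ℝ),(0:ℝ))) (p - (0,0)) = det2 v p := by
    simp only [det2, Prod.fst_sub, Prod.snd_sub]; ring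
  rwa [e] at h

lemma ccw_det' {v p : ℝ × ℝ} (h : 0 < det2 v p) : ccw ((0:ℝ),(0:ℝ)) v p := by
  unfold ccw
  have e : det2 (v - ((0:ℝ),(0:ℝ))) (p - (0,0)) = det2 v p := by
    simp only [det2, Prod.fst_sub, Prod.snd_sub]; ring
  rwa [e]

section Step

variable (m : ℕ)

noncomputable def uu (pre : Fin m → ℝ × ℝ) : ℝ × ℝ := cfg m pre ⟨m+2, by omega⟩
noncomputable def vv (pre : Fin m → ℝ × ℝ) : ℝ × ℝ := cfg m pre ⟨m+3, by omega⟩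
noncomputable def DD (pre : Fin m → ℝ × ℝ) : ℝ := det2 (uu m pre) (vv m pre)

variable {m}

lemma cfg_pre_eq (w : Fin (m+1) → ℝ × ℝ) {r : ℕ} (h : r < m+4) (h' : r < m+1+4) :
    cfg (m+1) w ⟨r, h'⟩ = cfg m (fun j : Fin m => w ⟨(j:ℕ), by omega⟩) ⟨r, h⟩ := by
  rw [cfg_succ]
  exact extc_lt' h h'

-- the three fiber inequalities, forward direction
lemma fiber_pos {w : Fin (m+1) → ℝ × ℝ} (hw : w ∈ Vst (m+1)) :
    0 < (w ⟨m, by omega⟩).2 ∧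
    0 < det2 (vv m (fun j : Fin m => w ⟨(j:ℕ), by omega⟩)) (w ⟨m, by omega⟩) ∧
    0 < det2 (vv m (fun j : Fin m => w ⟨(j:ℕ), by omega⟩) - uu m (fun j : Fin m => w ⟨(j:ℕ), by omega⟩))
        (w ⟨m, by omega⟩ - uu m (fun j : Fin m => w ⟨(j:ℕ), by omega⟩)) := by
  have hF1 : 0 < (w ⟨m, by omega⟩).2 := by
    have t := hw ⟨0, by omega⟩ ⟨1, by omega⟩ ⟨m+4, by omega⟩
      (Fin.mk_lt_mk.mpr (by omega)) (Fin.mk_lt_mk.mpr (by omega))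
    rw [cfg_lt (m := m+1) (i := 0) _ (by omega) (by omega),
      cfg_lt (m := m+1) (i := 1) _ (by omega) (by omega),
      cfg_ge (m := m+1) (i := m+4) _ (by omega) (by omega)] at t
    exact ccw_y t
  refine ⟨hF1, ?_, ?_⟩
  · have t := hw ⟨0, by omega⟩ ⟨m+3, by omega⟩ ⟨m+4, by omega⟩
      (Fin.mk_lt_mk.mpr (by omega)) (Fin.mk_lt_mk.mpr (by omega))
    rw [cfg_lt (m := m+1) (i := 0) _ (by omega) (by omega),
      cfg_pre_eq w (show m+3 < m+4 by omega) (by omega),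
      cfg_ge (m := m+1) (i := m+4) _ (by omega) (by omega)] at t
    exact ccw_det t
  · have t := hw ⟨m+2, by omega⟩ ⟨m+3, by omega⟩ ⟨m+4, by omega⟩
      (Fin.mk_lt_mk.mpr (by omega)) (Fin.mk_lt_mk.mpr (by omega))
    rw [cfg_pre_eq w (show m+2 < m+4 by omega) (by omega),
      cfg_pre_eq w (show m+3 < m+4 by omega) (by omega),
      cfg_ge (m := m+1) (i := m+4) _ (by omega) (by omega)] at t
    exact t

-- reconstruction of the new point
noncomputable def gP (pre : Fin m → ℝ × ℝ) (z : ℝ × ℝ) : ℝ × ℝ :=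
  (z.1 * (vv m pre).1 - z.2 * DD m pre / ((uu m pre).2 - (vv m pre).2), z.1 * (vv m pre).2)

noncomputable def wmk (pre : Fin m → ℝ × ℝ) (p : ℝ × ℝ) : Fin (m+1) → ℝ × ℝ :=
  fun i => if h : (i:ℕ) < m then pre ⟨i, h⟩ else p

lemma wmk_pre (pre : Fin m → ℝ × ℝ) (p : ℝ × ℝ) :
    (fun j : Fin m => wmk pre p ⟨(j:ℕ), by omega⟩) = pre := by
  funext j
  show dite _ _ _ = _
  rw [dif_pos j.isLt]

lemma wmk_last (pre : Fin m → ℝ × ℝ) (p : ℝ × ℝ) {h} : wmk pre p ⟨m, h⟩ = p := by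
  show dite _ _ _ = _
  rw [dif_neg (show ¬ m < m by omega)]

lemma cfg_wmk (pre : Fin m → ℝ × ℝ) (p : ℝ × ℝ) :
    cfg (m+1) (wmk pre p) = extc (cfg m pre) p := by
  rw [cfg_succ, wmk_pre, wmk_last]

-- the barycentric identity
lemma bary (u v p : ℝ × ℝ) (h2 : v.2 ≠ 0) (hD : det2 u v ≠ 0) :
    p.2 / v.2 + (u.2 - v.2) * det2 v p / (v.2 * det2 u v)
      + det2 (v - u) (p - u) / det2 u v = 1 := by
  simp only [det2, Prod.fst_sub, Prod.snd_sub] at *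
  rw [div_add_div _ _ h2 (mul_ne_zero h2 hD), div_add_div _ _ (mul_ne_zero h2 (mul_ne_zero h2 hD)) hD,
    div_eq_one_iff_eq (mul_ne_zero (mul_ne_zero h2 (mul_ne_zero h2 hD)) hD)]
  ring

lemma det2_v_gP (pre : Fin m → ℝ × ℝ) (z : ℝ × ℝ)
    (hne : (uu m pre).2 - (vv m pre).2 ≠ 0) :
    det2 (vv m pre) (gP pre z) = z.2 * ((vv m pre).2 * DD m pre) / ((uu m pre).2 - (vv m pre).2) := by
  simp only [det2, gP, DD, uu, vv] at *
  field_simp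
  ring

lemma det2_vu_gP (pre : Fin m → ℝ × ℝ) (z : ℝ × ℝ)
    (hne : (uu m pre).2 - (vv m pre).2 ≠ 0) :
    det2 (vv m pre - uu m pre) (gP pre z - uu m pre) = DD m pre * (1 - z.1 - z.2) := by
  simp only [det2, gP, DD, uu, vv, Prod.fst_sub, Prod.snd_sub] at *
  field_simp
  ring

-- membership for the inverse map
lemma wmk_mem {pre : Fin m → ℝ × ℝ} (hpre : pre ∈ Vst m) {z : ℝ × ℝ} (hz : z ∈ ΔSet) :
    wmk pre (gP pre z) ∈ Vst (m+1) := by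
  obtain ⟨hz1, hz2, hz3⟩ := hz
  have hv2 : 0 < (vv m pre).2 := pt_y_pos hpre _ (by norm_num)
  have hD : 0 < DD m pre := det_uv_pos hpre
  have huv : 0 < (uu m pre).2 - (vv m pre).2 := sub_pos.mpr (u2_gt_v2 hpre)
  set p := gP pre z with hp
  have hF1 : 0 < p.2 := by
    show 0 < z.1 * (vv m pre).2
    positivity
  have hF2 : 0 < det2 (vv m pre) p := by
    rw [hp, det2_v_gP pre z (by linarith)]
    positivity
  have hF3 : 0 < det2 (vv m pre - uu m pre) (p - uu m pre) := by
    rw [hp, det2_vu_gP pre z (by linarith)]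
    have : 0 < 1 - z.1 - z.2 := by linarith
    positivity
  show StrictlyConvexCCW (cfg (m+1) (wmk pre p))
  rw [cfg_wmk]
  apply convex_extc hpre
  apply insert_last (by omega) _ hpre p
  · rw [cfg_lt _ _ (by omega), cfg_lt _ _ (by omega)]
    exact ccw_y' hF1
  · have e2 : (⟨m + 4 - 2, by omega⟩ : Fin (m+4)) = ⟨m+2, by omega⟩ := by
      simp only [Fin.mk.injEq]; omega
    have e1 : (⟨m + 4 - 1, by omega⟩ : Fin (m+4)) = ⟨m+3, by omega⟩ := by
      simp only [Fin.mk.injEq]; omega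
    rw [e2, e1]
    exact hF3
  · have e1 : (⟨m + 4 - 1, by omega⟩ : Fin (m+4)) = ⟨m+3, by omega⟩ := by
      simp only [Fin.mk.injEq]; omega
    rw [e1, cfg_lt _ _ (by omega)]
    exact ccw_det' hF2

end Step


section StepHomeo
variable {m : ℕ}

noncomputable def preOf (x : ↥(Vst (m+1))) : Fin m → ℝ × ℝ :=
  fun j => (x : Fin (m+1) → ℝ × ℝ) ⟨(j:ℕ), by omega⟩

lemma preOf_mem (x : ↥(Vst (m+1))) : preOf x ∈ Vst m := Vst_restrict x.2

noncomputable def lastOf (x : ↥(Vst (m+1))) : ℝ × ℝ := (x : Fin (m+1) → ℝ × ℝ) ⟨m, by omega⟩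

noncomputable def fz (pre : Fin m → ℝ × ℝ) (p : ℝ × ℝ) : ℝ × ℝ :=
  (p.2 / (vv m pre).2,
   ((uu m pre).2 - (vv m pre).2) * det2 (vv m pre) p / ((vv m pre).2 * DD m pre))

lemma fz_mem (x : ↥(Vst (m+1))) : fz (preOf x) (lastOf x) ∈ ΔSet := by
  have hpre : preOf x ∈ Vst m := preOf_mem x
  have hv2 : 0 < (vv m (preOf x)).2 := pt_y_pos hpre ⟨m+3, by omega⟩ (by norm_num)
  have hD : 0 < det2 (uu m (preOf x)) (vv m (preOf x)) := det_uv_pos hpre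
  have huv : 0 < (uu m (preOf x)).2 - (vv m (preOf x)).2 := sub_pos.mpr (u2_gt_v2 hpre)
  obtain ⟨hF1, hF2, hF3⟩ := fiber_pos x.2
  replace hF1 : 0 < (lastOf x).2 := hF1
  replace hF2 : 0 < det2 (vv m (preOf x)) (lastOf x) := hF2
  replace hF3 : 0 < det2 (vv m (preOf x) - uu m (preOf x)) (lastOf x - uu m (preOf x)) := hF3
  refine ⟨?_, ?_, ?_⟩
  · show 0 < (lastOf x).2 / (vv m (preOf x)).2
    positivity
  · show 0 < ((uu m (preOf x)).2 - (vv m (preOf x)).2) * det2 (vv m (preOf x)) (lastOf x)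
      / ((vv m (preOf x)).2 * DD m (preOf x))
    have hDD : 0 < DD m (preOf x) := hD
    positivity
  · show (lastOf x).2 / (vv m (preOf x)).2 +
      ((uu m (preOf x)).2 - (vv m (preOf x)).2) * det2 (vv m (preOf x)) (lastOf x)
        / ((vv m (preOf x)).2 * DD m (preOf x)) < 1
    have hb := bary (uu m (preOf x)) (vv m (preOf x)) (lastOf x) (ne_of_gt hv2) (ne_of_gt hD)
    have hDD : DD m (preOf x) = det2 (uu m (preOf x)) (vv m (preOf x)) := rfl
    rw [hDD]
    have h3 : 0 < det2 (vv m (preOf x) - uu m (preOf x)) (lastOf x - uu m (preOf x))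
        / det2 (uu m (preOf x)) (vv m (preOf x)) := div_pos hF3 hD
    linarith

noncomputable def stepHomeo (m : ℕ) : ↥(Vst (m+1)) ≃ₜ ↥(Vst m) × ↥ΔSet where
  toFun x := (⟨preOf x, preOf_mem x⟩, ⟨fz (preOf x) (lastOf x), fz_mem x⟩)
  invFun z := ⟨wmk (z.1 : Fin m → ℝ × ℝ) (gP (z.1 : Fin m → ℝ × ℝ) (z.2 : ℝ × ℝ)),
    wmk_mem z.1.2 z.2.2⟩
  left_inv := by
    rintro ⟨w, hw⟩
    have hpre : preOf ⟨w, hw⟩ ∈ Vst m := preOf_mem _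
    set pre : Fin m → ℝ × ℝ := preOf (⟨w, hw⟩ : ↥(Vst (m+1))) with hpredef
    have hv2 : 0 < (vv m pre).2 := pt_y_pos hpre _ (by norm_num)
    have hD : 0 < DD m pre := det_uv_pos hpre
    have huv : 0 < (uu m pre).2 - (vv m pre).2 := sub_pos.mpr (u2_gt_v2 hpre)
    apply Subtype.ext
    show wmk pre (gP pre (fz pre (lastOf ⟨w, hw⟩))) = w
    funext i
    obtain ⟨iv, hiv⟩ := i
    by_cases hi : iv < m
    · show dite _ _ _ = _
      rw [dif_pos hi]
      rfl
    · have him : iv = m := by omega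
      show dite _ _ _ = _
      rw [dif_neg hi]
      have hw' : w ⟨iv, hiv⟩ = lastOf (⟨w, hw⟩ : ↥(Vst (m+1))) := by
        show w ⟨iv, hiv⟩ = w ⟨m, by omega⟩
        congr 1
        exact Fin.ext him
      show gP pre (fz pre (lastOf ⟨w, hw⟩)) = w ⟨iv, hiv⟩
      rw [hw']
      set p : ℝ × ℝ := lastOf (⟨w, hw⟩ : ↥(Vst (m+1)))
      have e2 : (gP pre (fz pre p)).2 = p.2 := by
        show p.2 / (vv m pre).2 * (vv m pre).2 = p.2
        field_simp
      have e1 : (gP pre (fz pre p)).1 = p.1 := by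
        show p.2 / (vv m pre).2 * (vv m pre).1 -
          ((uu m pre).2 - (vv m pre).2) * det2 (vv m pre) p / ((vv m pre).2 * DD m pre)
            * DD m pre / ((uu m pre).2 - (vv m pre).2) = p.1
        have hD' : DD m pre ≠ 0 := ne_of_gt hD
        have hv2' : (vv m pre).2 ≠ 0 := ne_of_gt hv2
        have huv' : (uu m pre).2 - (vv m pre).2 ≠ 0 := ne_of_gt huv
        field_simp [det2]
        simp only [det2]; ring
      exact Prod.ext e1 e2
  right_inv := by
    rintro ⟨⟨pre, hpre⟩, ⟨z, hz⟩⟩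
    have hv2 : 0 < (vv m pre).2 := pt_y_pos hpre _ (by norm_num)
    have hD : 0 < DD m pre := det_uv_pos hpre
    have huv : 0 < (uu m pre).2 - (vv m pre).2 := sub_pos.mpr (u2_gt_v2 hpre)
    have hpre2 : preOf (⟨wmk pre (gP pre z), wmk_mem hpre hz⟩ : ↥(Vst (m+1))) = pre := by
      show (fun j : Fin m => wmk pre (gP pre z) ⟨(j:ℕ), by omega⟩) = pre
      exact wmk_pre pre _
    have hlast2 : lastOf (⟨wmk pre (gP pre z), wmk_mem hpre hz⟩ : ↥(Vst (m+1))) = gP pre z := by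
      show wmk pre (gP pre z) ⟨m, by omega⟩ = gP pre z
      exact wmk_last pre _
    refine Prod.ext (Subtype.ext ?_) (Subtype.ext ?_)
    · exact hpre2
    · show fz (preOf _) (lastOf _) = z
      rw [hpre2, hlast2]
      have hD' : DD m pre ≠ 0 := ne_of_gt hD
      have hv2' : (vv m pre).2 ≠ 0 := ne_of_gt hv2
      have huv' : (uu m pre).2 - (vv m pre).2 ≠ 0 := ne_of_gt huv
      have ea : (fz pre (gP pre z)).1 = z.1 := by
        show (gP pre z).2 / (vv m pre).2 = z.1
        show z.1 * (vv m pre).2 / (vv m pre).2 = z.1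
        field_simp
      have eb : (fz pre (gP pre z)).2 = z.2 := by
        show ((uu m pre).2 - (vv m pre).2) * det2 (vv m pre) (gP pre z)
          / ((vv m pre).2 * DD m pre) = z.2
        rw [det2_v_gP pre z huv']
        field_simp
      exact Prod.ext ea eb
  continuous_toFun := by
    have hcpre : Continuous fun x : ↥(Vst (m+1)) => preOf x := by
      apply continuous_pi
      intro j
      exact (continuous_apply _).comp continuous_subtype_val
    have hcfg : ∀ i : Fin (m+4), Continuous fun pre : Fin m → ℝ × ℝ => cfg m pre i := by
      intro i
      unfold cfg
      by_cases h : (i:ℕ) < 4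
      · simp only [dif_pos h]; exact continuous_const
      · simp only [dif_neg h]; exact continuous_apply _
    have hcu : Continuous fun x : ↥(Vst (m+1)) => uu m (preOf x) := (hcfg _).comp hcpre
    have hcv : Continuous fun x : ↥(Vst (m+1)) => vv m (preOf x) := (hcfg _).comp hcpre
    have hclast : Continuous fun x : ↥(Vst (m+1)) => lastOf x :=
      (continuous_apply _).comp continuous_subtype_val
    have hcv2ne : ∀ x : ↥(Vst (m+1)), (vv m (preOf x)).2 ≠ 0 :=
      fun x => ne_of_gt (pt_y_pos (preOf_mem x) _ (by norm_num))
    have hcDne : ∀ x : ↥(Vst (m+1)), (vv m (preOf x)).2 * DD m (preOf x) ≠ 0 :=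
      fun x => mul_ne_zero (hcv2ne x) (ne_of_gt (det_uv_pos (preOf_mem x)))
    have hcD : Continuous fun x : ↥(Vst (m+1)) => DD m (preOf x) := by
      unfold DD det2
      fun_prop
    apply Continuous.prodMk
    · exact hcpre.subtype_mk _
    · apply Continuous.subtype_mk
      apply Continuous.prodMk
      · exact (hclast.snd.div (hcv.snd) hcv2ne)
      · unfold det2
        exact Continuous.div (by fun_prop) (by fun_prop) hcDne
  continuous_invFun := by
    have hcpre : Continuous fun z : ↥(Vst m) × ↥ΔSet => (z.1 : Fin m → ℝ × ℝ) :=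
      continuous_subtype_val.comp continuous_fst
    have hcz : Continuous fun z : ↥(Vst m) × ↥ΔSet => (z.2 : ℝ × ℝ) :=
      continuous_subtype_val.comp continuous_snd
    have hcfg : ∀ i : Fin (m+4), Continuous fun pre : Fin m → ℝ × ℝ => cfg m pre i := by
      intro i
      unfold cfg
      by_cases h : (i:ℕ) < 4
      · simp only [dif_pos h]; exact continuous_const
      · simp only [dif_neg h]; exact continuous_apply _
    have hcu : Continuous fun z : ↥(Vst m) × ↥ΔSet => uu m (z.1 : Fin m → ℝ × ℝ) :=
      (hcfg _).comp hcpre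
    have hcv : Continuous fun z : ↥(Vst m) × ↥ΔSet => vv m (z.1 : Fin m → ℝ × ℝ) :=
      (hcfg _).comp hcpre
    have huvne : ∀ z : ↥(Vst m) × ↥ΔSet,
        (uu m (z.1 : Fin m → ℝ × ℝ)).2 - (vv m (z.1 : Fin m → ℝ × ℝ)).2 ≠ 0 :=
      fun z => ne_of_gt (sub_pos.mpr (u2_gt_v2 z.1.2))
    have hgP : Continuous fun z : ↥(Vst m) × ↥ΔSet =>
        gP (z.1 : Fin m → ℝ × ℝ) (z.2 : ℝ × ℝ) := by
      unfold gP DD det2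
      apply Continuous.prodMk
      · apply Continuous.sub
        · fun_prop
        · exact Continuous.div (by fun_prop) (by fun_prop) huvne
      · fun_prop
    apply Continuous.subtype_mk
    apply continuous_pi
    intro i
    unfold wmk
    by_cases h : (i:ℕ) < m
    · simp only [dif_pos h]
      exact (continuous_apply _).comp hcpre
    · simp only [dif_neg h]
      exact hgP

end StepHomeo
-- base case: the reference quadrilateral is strictly convex
lemma qsq_convex (w : Fin 0 → ℝ × ℝ) : StrictlyConvexCCW (cfg 0 w) := by
  intro i j k hij hjk
  fin_cases i <;> fin_cases j <;> fin_cases k <;>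
    simp_all [Fin.lt_def, ccw, det2, cfg, qsq] <;> first | omega | norm_num

lemma vst_zero_unique (w : Fin 0 → ℝ × ℝ) : w ∈ Vst 0 := qsq_convex w

noncomputable def vstZeroHomeo : ↥(Vst 0) ≃ₜ (Fin 0 → ℝ × ℝ) := by
  haveI : Unique ↥(Vst 0) :=
    ⟨⟨⟨fun i => i.elim0, qsq_convex _⟩⟩, fun a => Subtype.ext (funext fun i => i.elim0)⟩
  exact Homeomorph.homeomorphOfUnique _ _

-- interval homeomorphism
noncomputable def iooHomeo : ↥(Set.Ioo (0:ℝ) 1) ≃ₜ ℝ := by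
  have him : (fun x : ℝ => 2 * x + (-1)) '' Set.Ioo (0:ℝ) 1 = Metric.ball (0:ℝ) 1 := by
    rw [Real.ball_eq_Ioo]
    ext y
    constructor
    · rintro ⟨x, ⟨hx1, hx2⟩, rfl⟩
      exact ⟨by norm_num; linarith, by norm_num; linarith⟩
    · intro hy
      simp only [Set.mem_Ioo] at hy
      refine ⟨(y+1)/2, ⟨by linarith [hy.1], by linarith [hy.2]⟩, by ring⟩
  have e1 : ↥(Set.Ioo (0:ℝ) 1) ≃ₜ ↥((fun x : ℝ => 2 * x + (-1)) '' Set.Ioo (0:ℝ) 1) := by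
    have := (affineHomeomorph (2:ℝ) (-1) (by norm_num)).image (Set.Ioo (0:ℝ) 1)
    convert this using 2 <;> rfl
  exact (e1.trans (Homeomorph.setCongr him)).trans Homeomorph.unitBall.symm

-- Δ ≃ₜ Ioo × Ioo
noncomputable def deltaHomeo : ↥ΔSet ≃ₜ ℝ × ℝ := by
  refine Homeomorph.trans ?_ (Homeomorph.prodCongr iooHomeo iooHomeo)
  exact {
    toFun := fun z => (⟨z.1.1 + z.1.2, by
        obtain ⟨h1, h2, h3⟩ := z.2
        exact ⟨by linarith, by linarith⟩⟩,
      ⟨z.1.1 / (z.1.1 + z.1.2), by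
        obtain ⟨h1, h2, h3⟩ := z.2
        constructor
        · positivity
        · rw [div_lt_one (by linarith)]; linarith⟩)
    invFun := fun y => ⟨(y.1.1 * y.2.1, y.1.1 * (1 - y.2.1)), by
        obtain ⟨ha1, ha2⟩ := y.1.2
        obtain ⟨hb1, hb2⟩ := y.2.2
        refine ⟨by positivity, ?_, ?_⟩
        · have : 0 < 1 - (y.2 : ℝ) := by linarith
          positivity
        · show (y.1:ℝ) * y.2 + y.1 * (1 - y.2) < 1
          calc (y.1:ℝ) * y.2 + y.1 * (1 - y.2) = y.1 := by ring
          _ < 1 := ha2⟩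
    left_inv := by
      rintro ⟨⟨a, b⟩, ⟨h1, h2, h3⟩⟩
      apply Subtype.ext
      show ((a + b) * (a / (a + b)), (a + b) * (1 - a / (a + b))) = (a, b)
      have hab : a + b ≠ 0 := by positivity
      refine Prod.ext ?_ ?_ <;> field_simp <;> ring
    right_inv := by
      rintro ⟨⟨a, ha⟩, ⟨b, hb⟩⟩
      obtain ⟨ha1, ha2⟩ := ha
      obtain ⟨hb1, hb2⟩ := hb
      refine Prod.ext (Subtype.ext ?_) (Subtype.ext ?_)
      · show a * b + a * (1 - b) = a
        ring
      · show a * b / (a * b + a * (1 - b)) = b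
        have : a * b + a * (1 - b) = a := by ring
        rw [this]
        field_simp
    continuous_toFun := by
      apply Continuous.prodMk
      · apply Continuous.subtype_mk
        fun_prop
      · apply Continuous.subtype_mk
        apply Continuous.div
        · fun_prop
        · fun_prop
        · rintro ⟨⟨a,b⟩, ⟨h1, h2, h3⟩⟩
          show a + b ≠ 0
          positivity
    continuous_invFun := by
      apply Continuous.subtype_mk
      fun_prop }

def osq : Fin 4 → ℝ × ℝ := ![((0:ℝ),(0:ℝ)), (1,0), (1,1), (0,1)]

noncomputable def cfgO (m : ℕ) (w : Fin m → ℝ × ℝ) : Fin (m+4) → ℝ × ℝ :=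
  fun i => if h : (i:ℕ) < 4 then osq ⟨i, h⟩ else w ⟨(i:ℕ) - 4, by omega⟩

def Vor (m : ℕ) : Set (Fin m → ℝ × ℝ) := {w | StrictlyConvexCCW (cfgO m w)}

lemma cfgO_lt (m : ℕ) (w : Fin m → ℝ × ℝ) {i : ℕ} (h4 : i < 4) (h : i < m + 4) :
    cfgO m w ⟨i, h⟩ = osq ⟨i, h4⟩ := by simp [cfgO, h4]

lemma cfgO_ge (m : ℕ) (w : Fin m → ℝ × ℝ) {i : ℕ} (h4 : ¬ i < 4) (h : i < m + 4) :
    cfgO m w ⟨i, h⟩ = w ⟨i - 4, by omega⟩ := by simp [cfgO, h4]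

noncomputable def Tmap (p : ℝ × ℝ) : ℝ × ℝ := (p.1 / (2 - p.1), p.2 / (2 - p.1))
noncomputable def Tinv (p : ℝ × ℝ) : ℝ × ℝ := (2 * p.1 / (1 + p.1), 2 * p.2 / (1 + p.1))

lemma div_pos_iff_num {x y : ℝ} (hy : 0 < y) : 0 < x / y ↔ 0 < x := by
  rw [div_pos_iff]
  constructor
  · rintro (⟨h, _⟩ | ⟨_, h⟩)
    · exact h
    · linarith
  · intro h; exact Or.inl ⟨h, hy⟩

lemma det_T (a b c : ℝ × ℝ) (ha : a.1 < 2) (hb : b.1 < 2) (hc : c.1 < 2) :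
    det2 (Tmap b - Tmap a) (Tmap c - Tmap a)
      = 2 * det2 (b - a) (c - a) / ((2 - a.1) * (2 - b.1) * (2 - c.1)) := by
  have ha' : (2:ℝ) - a.1 ≠ 0 := by linarith
  have hb' : (2:ℝ) - b.1 ≠ 0 := by linarith
  have hc' : (2:ℝ) - c.1 ≠ 0 := by linarith
  simp only [det2, Tmap, Prod.fst_sub, Prod.snd_sub]
  field_simp
  ring

lemma ccw_T {a b c : ℝ × ℝ} (ha : a.1 < 2) (hb : b.1 < 2) (hc : c.1 < 2) :
    ccw a b c ↔ ccw (Tmap a) (Tmap b) (Tmap c) := by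
  unfold ccw
  rw [det_T a b c ha hb hc]
  have hP : 0 < (2 - a.1) * (2 - b.1) * (2 - c.1) := by
    have : (0:ℝ) < 2 - a.1 := by linarith
    have : (0:ℝ) < 2 - b.1 := by linarith
    have : (0:ℝ) < 2 - c.1 := by linarith
    positivity
  rw [div_pos_iff_num hP]
  constructor <;> intro h <;> linarith

lemma det_Tinv (a b c : ℝ × ℝ) (ha : -1 < a.1) (hb : -1 < b.1) (hc : -1 < c.1) :
    det2 (Tinv b - Tinv a) (Tinv c - Tinv a)
      = 4 * det2 (b - a) (c - a) / ((1 + a.1) * (1 + b.1) * (1 + c.1)) := by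
  have ha' : (1:ℝ) + a.1 ≠ 0 := by linarith
  have hb' : (1:ℝ) + b.1 ≠ 0 := by linarith
  have hc' : (1:ℝ) + c.1 ≠ 0 := by linarith
  simp only [det2, Tinv, Prod.fst_sub, Prod.snd_sub]
  field_simp
  ring

lemma ccw_Tinv {a b c : ℝ × ℝ} (ha : -1 < a.1) (hb : -1 < b.1) (hc : -1 < c.1) :
    ccw a b c ↔ ccw (Tinv a) (Tinv b) (Tinv c) := by
  unfold ccw
  rw [det_Tinv a b c ha hb hc]
  have hP : 0 < (1 + a.1) * (1 + b.1) * (1 + c.1) := by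
    have : (0:ℝ) < 1 + a.1 := by linarith
    have : (0:ℝ) < 1 + b.1 := by linarith
    have : (0:ℝ) < 1 + c.1 := by linarith
    positivity
  rw [div_pos_iff_num hP]
  constructor <;> intro h <;> linarith

-- bounds
lemma cfgO_x_lt2 {m : ℕ} {w : Fin m → ℝ × ℝ} (hw : StrictlyConvexCCW (cfgO m w))
    (i : Fin (m+4)) : (cfgO m w i).1 < 2 := by
  obtain ⟨iv, hiv⟩ := i
  by_cases h4 : iv < 4
  · rw [cfgO_lt _ _ h4]
    interval_cases iv <;> norm_num [osq]
  · have t := hw ⟨1, by omega⟩ ⟨2, by omega⟩ ⟨iv, hiv⟩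
      (Fin.mk_lt_mk.mpr (by omega)) (Fin.mk_lt_mk.mpr (by omega))
    rw [cfgO_lt _ _ (by omega), cfgO_lt _ _ (by omega)] at t
    have e1 : osq ⟨1, by omega⟩ = (1,0) := rfl
    have e2 : osq ⟨2, by omega⟩ = (1,1) := rfl
    rw [e1, e2] at t
    unfold ccw det2 at t
    simp only [Prod.fst_sub, Prod.snd_sub] at t
    norm_num at t
    linarith

lemma cfg_x_gtm1 {m : ℕ} {w : Fin m → ℝ × ℝ} (hw : StrictlyConvexCCW (cfg m w))
    (i : Fin (m+4)) : -1 < (cfg m w i).1 := by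
  obtain ⟨iv, hiv⟩ := i
  by_cases h4 : iv < 4
  · rw [cfg_lt _ _ h4]
    interval_cases iv <;> norm_num [qsq]
  · exact pt_x_gt hw ⟨iv, hiv⟩ (show 4 ≤ iv by omega)

lemma Tmap_osq (i : Fin 4) : Tmap (osq i) = qsq i := by
  fin_cases i <;> refine Prod.ext ?_ ?_ <;> norm_num [Tmap, osq, qsq]

lemma Tinv_qsq (i : Fin 4) : Tinv (qsq i) = osq i := by
  fin_cases i <;> refine Prod.ext ?_ ?_ <;> norm_num [Tinv, osq, qsq]

lemma cfg_Tmap (m : ℕ) (w : Fin m → ℝ × ℝ) :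
    cfg m (fun j => Tmap (w j)) = fun i => Tmap (cfgO m w i) := by
  funext i
  obtain ⟨iv, hiv⟩ := i
  by_cases h4 : iv < 4
  · rw [cfg_lt _ _ h4, cfgO_lt _ _ h4, Tmap_osq]
  · rw [cfg_ge _ _ h4, cfgO_ge _ _ h4]

lemma cfgO_Tinv (m : ℕ) (w : Fin m → ℝ × ℝ) :
    cfgO m (fun j => Tinv (w j)) = fun i => Tinv (cfg m w i) := by
  funext i
  obtain ⟨iv, hiv⟩ := i
  by_cases h4 : iv < 4
  · rw [cfg_lt _ _ h4, cfgO_lt _ _ h4, Tinv_qsq]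
  · rw [cfg_ge _ _ h4, cfgO_ge _ _ h4]

lemma mem_Vst_of_Vor {m : ℕ} {w : Fin m → ℝ × ℝ} (hw : w ∈ Vor m) :
    (fun j => Tmap (w j)) ∈ Vst m := by
  show StrictlyConvexCCW (cfg m fun j => Tmap (w j))
  rw [cfg_Tmap]
  intro i j k hij hjk
  exact (ccw_T (cfgO_x_lt2 hw i) (cfgO_x_lt2 hw j) (cfgO_x_lt2 hw k)).mp (hw i j k hij hjk)

lemma mem_Vor_of_Vst {m : ℕ} {w : Fin m → ℝ × ℝ} (hw : w ∈ Vst m) :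
    (fun j => Tinv (w j)) ∈ Vor m := by
  show StrictlyConvexCCW (cfgO m fun j => Tinv (w j))
  rw [cfgO_Tinv]
  intro i j k hij hjk
  exact (ccw_Tinv (cfg_x_gtm1 hw i) (cfg_x_gtm1 hw j) (cfg_x_gtm1 hw k)).mp (hw i j k hij hjk)

-- pointwise bounds on the moving points themselves
lemma vor_pt_lt2 {m : ℕ} {w : Fin m → ℝ × ℝ} (hw : w ∈ Vor m) (j : Fin m) : (w j).1 < 2 := by
  have t := cfgO_x_lt2 hw ⟨(j:ℕ) + 4, by omega⟩
  rwa [cfgO_ge _ _ (by omega)] at t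

lemma vst_pt_gtm1 {m : ℕ} {w : Fin m → ℝ × ℝ} (hw : w ∈ Vst m) (j : Fin m) : -1 < (w j).1 := by
  have t := cfg_x_gtm1 hw ⟨(j:ℕ) + 4, by omega⟩
  rwa [cfg_ge _ _ (by omega)] at t

lemma Tinv_Tmap {p : ℝ × ℝ} (hp : p.1 < 2) : Tinv (Tmap p) = p := by
  have h1 : (2:ℝ) - p.1 ≠ 0 := by linarith
  have h2 : 1 + p.1 / (2 - p.1) = 2 / (2 - p.1) := by field_simp; ring
  refine Prod.ext ?_ ?_
  · show 2 * (p.1 / (2 - p.1)) / (1 + p.1 / (2 - p.1)) = p.1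
    rw [h2]; field_simp
  · show 2 * (p.2 / (2 - p.1)) / (1 + p.1 / (2 - p.1)) = p.2
    rw [h2]; field_simp

lemma Tmap_Tinv {p : ℝ × ℝ} (hp : -1 < p.1) : Tmap (Tinv p) = p := by
  have h1 : (1:ℝ) + p.1 ≠ 0 := by linarith
  have h2 : 2 - 2 * p.1 / (1 + p.1) = 2 / (1 + p.1) := by field_simp; ring
  refine Prod.ext ?_ ?_
  · show 2 * p.1 / (1 + p.1) / (2 - 2 * p.1 / (1 + p.1)) = p.1
    rw [h2]; field_simp
  · show 2 * p.2 / (1 + p.1) / (2 - 2 * p.1 / (1 + p.1)) = p.2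
    rw [h2]; field_simp

noncomputable def vorHomeo (m : ℕ) : ↥(Vor m) ≃ₜ ↥(Vst m) where
  toFun x := ⟨fun j => Tmap ((x : Fin m → ℝ × ℝ) j), mem_Vst_of_Vor x.2⟩
  invFun x := ⟨fun j => Tinv ((x : Fin m → ℝ × ℝ) j), mem_Vor_of_Vst x.2⟩
  left_inv := by
    rintro ⟨w, hw⟩
    apply Subtype.ext
    funext j
    exact Tinv_Tmap (vor_pt_lt2 hw j)
  right_inv := by
    rintro ⟨w, hw⟩
    apply Subtype.ext
    funext j
    exact Tmap_Tinv (vst_pt_gtm1 hw j)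
  continuous_toFun := by
    apply Continuous.subtype_mk
    apply continuous_pi
    intro j
    have hc : Continuous fun x : ↥(Vor m) => (x : Fin m → ℝ × ℝ) j :=
      (continuous_apply j).comp continuous_subtype_val
    have hne : ∀ x : ↥(Vor m), 2 - ((x : Fin m → ℝ × ℝ) j).1 ≠ 0 :=
      fun x => by have := vor_pt_lt2 x.2 j; intro hc; linarith [hc]
    unfold Tmap
    exact Continuous.prodMk
      (Continuous.div hc.fst (continuous_const.sub hc.fst) hne)
      (Continuous.div hc.snd (continuous_const.sub hc.fst) hne)
  continuous_invFun := by
    apply Continuous.subtype_mk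
    apply continuous_pi
    intro j
    have hc : Continuous fun x : ↥(Vst m) => (x : Fin m → ℝ × ℝ) j :=
      (continuous_apply j).comp continuous_subtype_val
    have hne : ∀ x : ↥(Vst m), 1 + ((x : Fin m → ℝ × ℝ) j).1 ≠ 0 :=
      fun x => by have := vst_pt_gtm1 x.2 j; intro hc; linarith [hc]
    unfold Tinv
    exact Continuous.prodMk
      (Continuous.div (continuous_const.mul hc.fst) (continuous_const.add hc.fst) hne)
      (Continuous.div (continuous_const.mul hc.snd) (continuous_const.add hc.fst) hne)

lemma vst_nonempty (m : ℕ) : (Vst m).Nonempty := by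
  induction m with
  | zero => exact ⟨fun i => i.elim0, qsq_convex _⟩
  | succ m ih =>
      obtain ⟨w, hw⟩ := ih
      exact ⟨wmk w (gP w (1/4, 1/4)), wmk_mem hw (by norm_num [ΔSet])⟩

noncomputable def prodRHomeo (m : ℕ) : (Fin m → ℝ × ℝ) × (ℝ × ℝ) ≃ₜ (Fin (m+1) → ℝ × ℝ) :=
  (Homeomorph.prodCongr (Homeomorph.refl _) (Homeomorph.funUnique (Fin 1) (ℝ × ℝ)).symm).trans
    (Fin.appendHomeomorph m 1)

lemma vst_homeo (m : ℕ) : Nonempty (↥(Vst m) ≃ₜ (Fin m → ℝ × ℝ)) := by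
  induction m with
  | zero => exact ⟨vstZeroHomeo⟩
  | succ m ih =>
      obtain ⟨e⟩ := ih
      exact ⟨((stepHomeo m).trans (Homeomorph.prodCongr e deltaHomeo)).trans (prodRHomeo m)⟩


-- continuity of configuration evaluation
lemma cont_cfgO {m : ℕ} (i : Fin (m+4)) : Continuous fun w : Fin m → ℝ × ℝ => cfgO m w i := by
  unfold cfgO
  by_cases h : (i:ℕ) < 4
  · simp only [dif_pos h]; exact continuous_const
  · simp only [dif_neg h]; exact continuous_apply _

lemma isOpen_Vor (m : ℕ) : IsOpen (Vor m) := by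
  have hVor : Vor m = ⋂ (i : Fin (m+4)) (j : Fin (m+4)) (k : Fin (m+4)),
      {w : Fin m → ℝ × ℝ | i < j → j < k →
        0 < det2 (cfgO m w j - cfgO m w i) (cfgO m w k - cfgO m w i)} := by
    ext w
    simp only [Vor, mem_setOf_eq, mem_iInter]
    rfl
  rw [hVor]
  refine isOpen_iInter_of_finite fun i => isOpen_iInter_of_finite fun j =>
    isOpen_iInter_of_finite fun k => ?_
  by_cases hij : i < j
  · by_cases hjk : j < k
    · have hset : {w : Fin m → ℝ × ℝ | i < j → j < k →
          0 < det2 (cfgO m w j - cfgO m w i) (cfgO m w k - cfgO m w i)}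
          = {w : Fin m → ℝ × ℝ |
          0 < det2 (cfgO m w j - cfgO m w i) (cfgO m w k - cfgO m w i)} := by
        ext w; simp [hij, hjk]
      rw [hset]
      have h1 := cont_cfgO (m := m) i
      have h2 := cont_cfgO (m := m) j
      have h3 := cont_cfgO (m := m) k
      apply isOpen_lt continuous_const
      unfold det2
      exact (((h2.sub h1).fst.mul (h3.sub h1).snd).sub ((h2.sub h1).snd.mul (h3.sub h1).fst))
    · have hset : {w : Fin m → ℝ × ℝ | i < j → j < k →
          0 < det2 (cfgO m w j - cfgO m w i) (cfgO m w k - cfgO m w i)} = univ := by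
        ext w; simp [hjk]
      rw [hset]; exact isOpen_univ
  · have hset : {w : Fin m → ℝ × ℝ | i < j → j < k →
        0 < det2 (cfgO m w j - cfgO m w i) (cfgO m w k - cfgO m w i)} = univ := by
      ext w; simp [hij]
    rw [hset]; exact isOpen_univ

def TIoo (k : ℕ) : Set (Fin k → ℝ) := {t | ∀ j, t j ∈ Set.Ioo (0:ℝ) 1}

lemma isOpen_TIoo (k : ℕ) : IsOpen (TIoo k) := by
  have : TIoo k = ⋂ j : Fin k, (fun t : Fin k → ℝ => t j) ⁻¹' (Set.Ioo (0:ℝ) 1) := by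
    ext t; simp [TIoo]
  rw [this]
  exact isOpen_iInter_of_finite fun j => isOpen_Ioo.preimage (continuous_apply j)

noncomputable def piSubtypeHomeo (k : ℕ) : ↥(TIoo k) ≃ₜ (Fin k → ↥(Set.Ioo (0:ℝ) 1)) where
  toFun t := fun j => ⟨(t : Fin k → ℝ) j, t.2 j⟩
  invFun f := ⟨fun j => (f j : ℝ), fun j => (f j).2⟩
  left_inv t := Subtype.ext rfl
  right_inv f := funext fun j => Subtype.ext rfl
  continuous_toFun := continuous_pi fun j =>
    (((continuous_apply j).comp continuous_subtype_val).subtype_mk _)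
  continuous_invFun := (continuous_pi fun j =>
    continuous_subtype_val.comp (continuous_apply j)).subtype_mk _

-- the key set identification
lemma normSeedSet_eq (m k : ℕ) : normSeedSet (m+4) k = (Vor m) ×ˢ (TIoo k) := by
  ext x
  constructor
  · rintro ⟨h1, h2⟩
    exact ⟨h1, h2⟩
  · rintro ⟨h1, h2⟩
    exact ⟨h1, h2⟩


end PentagramCell

open PentagramCell in
/-- **`C(n,k)` is an open cell of dimension `(2n-8)+k`.**  For `n ≥ 4` and
`1 ≤ k ≤ n-1`, the set `U = normSeedSet n k` parametrizing normalized seeds of type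
`(n,k)` is a nonempty open subset of `ℝ^(2n-8+k)` which is homeomorphic to
`ℝ^(2n-8+k)`. -/
theorem normSeedSet_open_cell (n k : ℕ) (hn : 4 ≤ n) (hk1 : 1 ≤ k) (hkn : k ≤ n - 1) :
    (normSeedSet n k).Nonempty ∧ IsOpen (normSeedSet n k) ∧
      Nonempty (normSeedSet n k ≃ₜ (Fin (2 * n - 8 + k) → ℝ)) := by
  obtain ⟨m, rfl⟩ := Nat.exists_eq_add_of_le' hn
  rw [normSeedSet_eq m k]
  refine ⟨?_, ?_, ?_⟩
  · obtain ⟨w, hw⟩ := vst_nonempty m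
    exact ⟨((fun j => Tinv (w j)), fun _ => 1/2),
      mem_Vor_of_Vst hw, fun j => by norm_num⟩
  · exact (isOpen_Vor m).prod (isOpen_TIoo k)
  · obtain ⟨e⟩ := vst_homeo m
    have E : ↥((Vor m) ×ˢ (TIoo k)) ≃ₜ (Fin m → ℝ × ℝ) × (Fin k → ℝ) :=
      (Homeomorph.Set.prod _ _).trans
        (Homeomorph.prodCongr ((vorHomeo m).trans e)
          ((piSubtypeHomeo k).trans (Homeomorph.piCongrRight fun _ => iooHomeo)))
    have hfr : Module.finrank ℝ ((Fin m → ℝ × ℝ) × (Fin k → ℝ))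
        = Module.finrank ℝ (Fin (2 * (m+4) - 8 + k) → ℝ) := by
      rw [Module.finrank_prod, Module.finrank_pi_fintype, Module.finrank_pi, Module.finrank_pi]
      have : Module.finrank ℝ (ℝ × ℝ) = 2 := by
        rw [Module.finrank_prod, Module.finrank_self]
      simp only [this, Finset.sum_const, Finset.card_univ, Fintype.card_fin, smul_eq_mul]
      omega
    have L := ContinuousLinearEquiv.ofFinrankEq (𝕜 := ℝ) hfr
    exact ⟨E.trans L.toHomeomorph⟩
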